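/- Let u : ℝ² → ℝ be twice continuously differentiable on the closed upper half-plane {ξ₂ ≥ 0}, harmonic on the open upper half-plane {ξ₂ > 0}, and suppose there exist C > 0 and α > 0 such that |u(ξ)|, |∇u(ξ)| and all second partial derivatives of u at ξ are bounded by C e^{−α ξ₂} for all ξ with ξ₂ ≥ 0. Then the function g(ξ₁) = ∫_0^∞ u(ξ₁, t) dt is twice differentiable on ℝ and g''(ξ₁) = ∂u/∂ξ₂(ξ₁, 0) for every ξ₁. (This is the identity d²/dξ₁² ∫_0^∞ X_η(ξ₁, t) dt = −1 used in the proof of Lemma 5.2, where ∂X_η/∂ξ₂ = −1 on the Neumann part of the boundary.) -/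

import Mathlib

open MeasureTheory Set Filter

/-- The identity `d²/dξ₁² ∫_0^∞ u(ξ₁, t) dt = ∂u/∂ξ₂(ξ₁, 0)` used in the proof of
Lemma 5.2: for `u` which is `C²` on the closed upper half-plane, harmonic on the open
upper half-plane and exponentially decaying together with its gradient and second
partial derivatives, the function `g(ξ₁) = ∫_0^∞ u(ξ₁, t) dt` is twice differentiable
with `g''(ξ₁) = ∂u/∂ξ₂(ξ₁, 0)`. -/
theorem integral_along_vertical_second_derivative
    (u : ℝ × ℝ → ℝ) (C α : ℝ) (hC : 0 < C) (hα : 0 < α)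
    (hu : ContDiffOn ℝ 2 u {ξ : ℝ × ℝ | 0 ≤ ξ.2})
    (hharm : ∀ ξ : ℝ × ℝ, 0 < ξ.2 →
      iteratedDeriv 2 (fun x₁ => u (x₁, ξ.2)) ξ.1 +
        iteratedDeriv 2 (fun t => u (ξ.1, t)) ξ.2 = 0)
    (hdecay : ∀ ξ : ℝ × ℝ, 0 ≤ ξ.2 → |u ξ| ≤ C * Real.exp (-α * ξ.2))
    (hdecay₁ : ∀ ξ : ℝ × ℝ, 0 ≤ ξ.2 →
      ‖fderivWithin ℝ u {ξ' : ℝ × ℝ | 0 ≤ ξ'.2} ξ‖ ≤ C * Real.exp (-α * ξ.2))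
    (hdecay₂ : ∀ ξ : ℝ × ℝ, 0 ≤ ξ.2 →
      ‖iteratedFDerivWithin ℝ 2 u {ξ' : ℝ × ℝ | 0 ≤ ξ'.2} ξ‖ ≤ C * Real.exp (-α * ξ.2)) :
    Differentiable ℝ (fun x₁ : ℝ => ∫ t in Set.Ioi (0 : ℝ), u (x₁, t)) ∧
    Differentiable ℝ (deriv (fun x₁ : ℝ => ∫ t in Set.Ioi (0 : ℝ), u (x₁, t))) ∧
    ∀ ξ₁ : ℝ,
      deriv (deriv (fun x₁ : ℝ => ∫ t in Set.Ioi (0 : ℝ), u (x₁, t))) ξ₁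
        = derivWithin (fun t => u (ξ₁, t)) (Set.Ici 0) 0 := by
  set S : Set (ℝ × ℝ) := {ξ' : ℝ × ℝ | 0 ≤ ξ'.2} with hSdef
  set U : Set (ℝ × ℝ) := {ξ' : ℝ × ℝ | 0 < ξ'.2} with hUdef
  have hUopen : IsOpen U := isOpen_lt continuous_const continuous_snd
  have hUS : U ⊆ S := by intro ξ h; simp only [hUdef, mem_setOf_eq] at h; exact le_of_lt h
  have hSuniq : UniqueDiffOn ℝ S := by
    have : S = (univ : Set ℝ) ×ˢ Ici (0:ℝ) := by ext ξ; simp [hSdef, Set.mem_prod]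
    rw [this]; exact uniqueDiffOn_univ.prod (uniqueDiffOn_Ici 0)
  have hSnhds : ∀ ξ : ℝ × ℝ, 0 < ξ.2 → S ∈ nhds ξ :=
    fun ξ h => Filter.mem_of_superset (hUopen.mem_nhds h) hUS
  have hAt : ∀ ξ : ℝ × ℝ, 0 < ξ.2 → ContDiffAt ℝ 2 u ξ :=
    fun ξ h => hu.contDiffAt (hSnhds ξ h)
  have hdiff : ∀ ξ : ℝ × ℝ, 0 < ξ.2 → DifferentiableAt ℝ u ξ :=
    fun ξ h => (hAt ξ h).differentiableAt two_ne_zero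
  have hfdiff : ∀ ξ : ℝ × ℝ, 0 < ξ.2 → DifferentiableAt ℝ (fderiv ℝ u) ξ :=
    fun ξ h => ((hAt ξ h).fderiv_right (m := 1) le_rfl).differentiableAt one_ne_zero
  -- horizontal curve
  have hcH : ∀ x t : ℝ, HasDerivAt (fun y : ℝ => (y, t)) ((1:ℝ), (0:ℝ)) x :=
    fun x t => (hasDerivAt_id x).prodMk (hasDerivAt_const x t)
  have hcV : ∀ x t : ℝ, HasDerivAt (fun s : ℝ => (x, s)) ((0:ℝ), (1:ℝ)) t :=
    fun x t => (hasDerivAt_const t x).prodMk (hasDerivAt_id t)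
  -- first derivative in x
  have h1 : ∀ x t : ℝ, 0 < t → HasDerivAt (fun y => u (y, t))
      (fderiv ℝ u (x, t) (1, 0)) x :=
    fun x t ht => (hdiff (x,t) ht).hasFDerivAt.comp_hasDerivAt x (hcH x t)
  -- second derivative in x
  have h2 : ∀ x t : ℝ, 0 < t → HasDerivAt (fun y => fderiv ℝ u (y, t) (1, 0))
      (fderiv ℝ (fderiv ℝ u) (x, t) (1, 0) (1, 0)) x :=
    fun x t ht => (ContinuousLinearMap.apply ℝ ℝ ((1:ℝ),(0:ℝ))).hasFDerivAt.comp_hasDerivAt x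
      ((hfdiff (x,t) ht).hasFDerivAt.comp_hasDerivAt x (hcH x t))
  -- vertical first derivative (interior)
  have hv1 : ∀ x t : ℝ, 0 < t → HasDerivAt (fun s => u (x, s))
      (fderiv ℝ u (x, t) (0, 1)) t :=
    fun x t ht => (hdiff (x,t) ht).hasFDerivAt.comp_hasDerivAt t (hcV x t)
  -- vertical second derivative (interior)
  have hv2 : ∀ x t : ℝ, 0 < t → HasDerivAt (fun s => fderiv ℝ u (x, s) (0, 1))
      (fderiv ℝ (fderiv ℝ u) (x, t) (0, 1) (0, 1)) t :=
    fun x t ht => (ContinuousLinearMap.apply ℝ ℝ ((0:ℝ),(1:ℝ))).hasFDerivAt.comp_hasDerivAt t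
      ((hfdiff (x,t) ht).hasFDerivAt.comp_hasDerivAt t (hcV x t))
  -- fderiv = fderivWithin on interior
  have hfw : ∀ ξ : ℝ × ℝ, 0 < ξ.2 → fderivWithin ℝ u S ξ = fderiv ℝ u ξ :=
    fun ξ h => fderivWithin_of_mem_nhds (hSnhds ξ h)
  -- bound on fderiv
  have hbd1 : ∀ x t : ℝ, 0 < t → ∀ v : ℝ × ℝ, ‖v‖ = 1 →
      |fderiv ℝ u (x, t) v| ≤ C * Real.exp (-α * t) := by
    intro x t ht v hv
    calc |fderiv ℝ u (x, t) v| ≤ ‖fderiv ℝ u (x, t)‖ * ‖v‖ :=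
          (fderiv ℝ u (x, t)).le_opNorm v
      _ = ‖fderivWithin ℝ u S (x, t)‖ := by rw [hfw (x,t) ht, hv, mul_one]
      _ ≤ C * Real.exp (-α * t) := hdecay₁ (x, t) ht.le
  -- bound on second derivatives
  have hbd2 : ∀ x t : ℝ, 0 < t → ∀ v w : ℝ × ℝ, ‖v‖ = 1 → ‖w‖ = 1 →
      |fderiv ℝ (fderiv ℝ u) (x, t) v w| ≤ C * Real.exp (-α * t) := by
    intro x t ht v w hv hw
    have heq : fderiv ℝ (fderiv ℝ u) (x,t) v w = iteratedFDeriv ℝ 2 u (x,t) ![v, w] := by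
      rw [iteratedFDeriv_two_apply]; simp
    have hiw : iteratedFDerivWithin ℝ 2 u S (x,t) = iteratedFDeriv ℝ 2 u (x,t) := by
      rw [← iteratedFDerivWithin_univ]
      exact iteratedFDerivWithin_congr_set (by rw [Filter.eventuallyEq_univ]; exact hSnhds _ ht) 2
    calc |fderiv ℝ (fderiv ℝ u) (x,t) v w|
        ≤ ‖iteratedFDeriv ℝ 2 u (x,t)‖ * (‖v‖ * ‖w‖) := by
          rw [heq]
          simpa [Fin.prod_univ_two, mul_assoc] using (iteratedFDeriv ℝ 2 u (x,t)).le_opNorm ![v,w]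
      _ = ‖iteratedFDerivWithin ℝ 2 u S (x,t)‖ := by rw [hiw, hv, hw]; ring
      _ ≤ C * Real.exp (-α * t) := hdecay₂ (x,t) ht.le
  have hnorm10 : ‖((1:ℝ),(0:ℝ))‖ = 1 := by simp [Prod.norm_def]
  have hnorm01 : ‖((0:ℝ),(1:ℝ))‖ = 1 := by simp [Prod.norm_def]
  -- bound function and its integrability
  have hboundInt : IntegrableOn (fun t : ℝ => C * Real.exp (-α * t)) (Ioi 0) :=
    (exp_neg_integrableOn_Ioi 0 hα).const_mul C
  have hboundTendsto : Tendsto (fun t : ℝ => C * Real.exp (-α * t)) atTop (nhds 0) := by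
    have h1 : Tendsto (fun t : ℝ => α * t) atTop atTop :=
      Tendsto.const_mul_atTop hα tendsto_id
    have h2 : Tendsto (fun t : ℝ => Real.exp (-(α * t))) atTop (nhds 0) :=
      Real.tendsto_exp_neg_atTop_nhds_zero.comp h1
    simpa [neg_mul, mul_zero] using h2.const_mul C
  -- continuity facts
  have hucont : ContinuousOn u S := hu.continuousOn
  have hf1contU : ContinuousOn (fderiv ℝ u) U :=
    (hu.mono hUS).continuousOn_fderiv_of_isOpen hUopen one_le_two
  have hf2contU : ContinuousOn (fderiv ℝ (fderiv ℝ u)) U := by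
    have : ContDiffOn ℝ 1 (fderiv ℝ u) U :=
      (hu.mono hUS).fderiv_of_isOpen hUopen (le_refl 2)
    exact this.continuousOn_fderiv_of_isOpen hUopen le_rfl
  have hcurveMem : ∀ x : ℝ, ∀ t ∈ Ioi (0:ℝ), ((x, t) : ℝ × ℝ) ∈ U := fun x t ht => ht
  have hcurveCont : ∀ x : ℝ, Continuous (fun t : ℝ => ((x, t) : ℝ × ℝ)) :=
    fun x => continuous_const.prodMk continuous_id
  -- measurability of slices
  have hmeas_u : ∀ x : ℝ, AEStronglyMeasurable (fun t => u (x, t)) (volume.restrict (Ioi 0)) := by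
    intro x
    exact ((hucont.comp (hcurveCont x).continuousOn
      (fun t (ht : t ∈ Ioi (0:ℝ)) => (le_of_lt ht : (0:ℝ) ≤ t))).aestronglyMeasurable
        measurableSet_Ioi)
  have hmeas_f1 : ∀ x : ℝ, AEStronglyMeasurable (fun t => fderiv ℝ u (x, t) (1, 0))
      (volume.restrict (Ioi 0)) := by
    intro x
    have : ContinuousOn (fun t : ℝ => fderiv ℝ u (x, t) (1, 0)) (Ioi 0) := by
      exact (ContinuousLinearMap.apply ℝ ℝ ((1:ℝ),(0:ℝ))).continuous.comp_continuousOn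
        (hf1contU.comp (hcurveCont x).continuousOn (hcurveMem x))
    exact this.aestronglyMeasurable measurableSet_Ioi
  have hmeas_f2 : ∀ (x : ℝ) (v w : ℝ × ℝ), AEStronglyMeasurable
      (fun t => fderiv ℝ (fderiv ℝ u) (x, t) v w) (volume.restrict (Ioi 0)) := by
    intro x v w
    have : ContinuousOn (fun t : ℝ => fderiv ℝ (fderiv ℝ u) (x, t) v w) (Ioi 0) := by
      exact (ContinuousLinearMap.apply ℝ ℝ w).continuous.comp_continuousOn
        ((ContinuousLinearMap.apply ℝ (ℝ × ℝ →L[ℝ] ℝ) v).continuous.comp_continuousOn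
          (hf2contU.comp (hcurveCont x).continuousOn (hcurveMem x)))
    exact this.aestronglyMeasurable measurableSet_Ioi
  -- integrability of u slice
  have hInt_u : ∀ x : ℝ, IntegrableOn (fun t => u (x, t)) (Ioi 0) := by
    intro x
    refine Integrable.mono' hboundInt (hmeas_u x) ?_
    filter_upwards [ae_restrict_mem measurableSet_Ioi] with t ht
    exact (by simpa [Real.norm_eq_abs] using hdecay (x, t) (le_of_lt ht))
  -- first differentiation under the integral sign
  have hgd : ∀ x : ℝ, HasDerivAt (fun x₁ : ℝ => ∫ t in Set.Ioi (0 : ℝ), u (x₁, t))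
      (∫ t in Set.Ioi (0 : ℝ), fderiv ℝ u (x, t) (1, 0)) x := by
    intro x
    have := hasDerivAt_integral_of_dominated_loc_of_deriv_le (μ := volume.restrict (Ioi 0))
      (x₀ := x) (F := fun y t => u (y, t)) (F' := fun y t => fderiv ℝ u (y, t) (1, 0))
      (bound := fun t => C * Real.exp (-α * t)) (Metric.ball_mem_nhds x one_pos)
      (Eventually.of_forall fun y => hmeas_u y) (hInt_u x) (hmeas_f1 x)
      ?_ hboundInt ?_
    · exact this.2
    · filter_upwards [ae_restrict_mem measurableSet_Ioi] with t ht y _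
      simpa [Real.norm_eq_abs] using hbd1 y t ht ((1:ℝ),(0:ℝ)) hnorm10
    · filter_upwards [ae_restrict_mem measurableSet_Ioi] with t ht y _
      exact h1 y t ht
  -- second differentiation under the integral sign
  have hg1d : ∀ x : ℝ, HasDerivAt (fun x₁ : ℝ => ∫ t in Set.Ioi (0 : ℝ), fderiv ℝ u (x₁, t) (1, 0))
      (∫ t in Set.Ioi (0 : ℝ), fderiv ℝ (fderiv ℝ u) (x, t) (1, 0) (1, 0)) x := by
    intro x
    have hInt_f1 : IntegrableOn (fun t => fderiv ℝ u (x, t) (1, 0)) (Ioi 0) := by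
      refine Integrable.mono' hboundInt (hmeas_f1 x) ?_
      filter_upwards [ae_restrict_mem measurableSet_Ioi] with t ht
      simpa [Real.norm_eq_abs] using hbd1 x t ht ((1:ℝ),(0:ℝ)) hnorm10
    have := hasDerivAt_integral_of_dominated_loc_of_deriv_le (μ := volume.restrict (Ioi 0))
      (x₀ := x) (F := fun y t => fderiv ℝ u (y, t) (1, 0))
      (F' := fun y t => fderiv ℝ (fderiv ℝ u) (y, t) (1, 0) (1, 0))
      (bound := fun t => C * Real.exp (-α * t)) (Metric.ball_mem_nhds x one_pos)
      (Eventually.of_forall fun y => hmeas_f1 y) hInt_f1 (hmeas_f2 x _ _)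
      ?_ hboundInt ?_
    · exact this.2
    · filter_upwards [ae_restrict_mem measurableSet_Ioi] with t ht y _
      simpa [Real.norm_eq_abs] using hbd2 y t ht _ _ hnorm10 hnorm10
    · filter_upwards [ae_restrict_mem measurableSet_Ioi] with t ht y _
      exact h2 y t ht
  -- harmonicity: ∂₁₁ u = - ∂₂₂ u on the interior
  have hharm' : ∀ x t : ℝ, 0 < t →
      fderiv ℝ (fderiv ℝ u) (x, t) (1, 0) (1, 0)
        = - fderiv ℝ (fderiv ℝ u) (x, t) (0, 1) (0, 1) := by
    intro x t ht
    have h2iter : ∀ f : ℝ → ℝ, iteratedDeriv 2 f = deriv (deriv f) := by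
      intro f; rw [show (2:ℕ) = 1+1 from rfl, iteratedDeriv_succ, iteratedDeriv_one]
    have e1 : iteratedDeriv 2 (fun x₁ => u (x₁, t)) x
        = fderiv ℝ (fderiv ℝ u) (x, t) (1, 0) (1, 0) := by
      rw [h2iter]
      have hd : deriv (fun y => u (y, t)) = fun y => fderiv ℝ u (y, t) (1, 0) :=
        funext fun y => (h1 y t ht).deriv
      rw [hd]
      exact (h2 x t ht).deriv
    have e2 : iteratedDeriv 2 (fun s => u (x, s)) t
        = fderiv ℝ (fderiv ℝ u) (x, t) (0, 1) (0, 1) := by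
      rw [h2iter]
      have hd : deriv (fun s => u (x, s)) =ᶠ[nhds t] fun s => fderiv ℝ u (x, s) (0, 1) := by
        filter_upwards [isOpen_Ioi.mem_nhds (show t ∈ Ioi (0:ℝ) from ht)] with s hs
        exact (hv1 x s hs).deriv
      rw [hd.deriv_eq]
      exact (hv2 x t ht).deriv
    have := hharm (x, t) ht
    simp only at this
    rw [e1, e2] at this
    linarith
  have hmapsTo : ∀ x : ℝ, MapsTo (fun s : ℝ => ((x, s) : ℝ × ℝ)) (Ici 0) S := by
    intro x s hs
    simpa [hSdef] using hs
  -- FTC on the vertical half-line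
  have hFTC : ∀ x : ℝ, (∫ t in Ioi (0:ℝ), fderiv ℝ (fderiv ℝ u) (x, t) (0, 1) (0, 1))
      = - fderivWithin ℝ u S (x, 0) (0, 1) := by
    intro x
    have hmem0 : ((x, (0:ℝ)) : ℝ × ℝ) ∈ S := by simp [hSdef]
    have hfWcont : ContinuousOn (fderivWithin ℝ u S) S :=
      hu.continuousOn_fderivWithin hSuniq one_le_two
    have hφc : ContinuousWithinAt (fun s : ℝ => fderivWithin ℝ u S (x, s) (0, 1)) (Ici 0) 0 := by
      have c1 : ContinuousWithinAt (fun s : ℝ => fderivWithin ℝ u S (x, s)) (Ici 0) 0 :=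
        (hfWcont (x, 0) hmem0).comp (hcurveCont x).continuousWithinAt (hmapsTo x)
      exact ((ContinuousLinearMap.apply ℝ ℝ
        ((0:ℝ),(1:ℝ))).continuous.continuousAt).comp_continuousWithinAt c1
    have hφd : ∀ t ∈ Ioi (0:ℝ), HasDerivAt (fun s : ℝ => fderivWithin ℝ u S (x, s) (0, 1))
        (fderiv ℝ (fderiv ℝ u) (x, t) (0, 1) (0, 1)) t := by
      intro t ht
      refine (hv2 x t ht).congr_of_eventuallyEq ?_
      filter_upwards [isOpen_Ioi.mem_nhds (show t ∈ Ioi (0:ℝ) from ht)] with s hs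
      rw [hfw (x, s) hs]
    have hInt_ψ : IntegrableOn (fun t => fderiv ℝ (fderiv ℝ u) (x, t) (0, 1) (0, 1)) (Ioi 0) := by
      refine Integrable.mono' hboundInt (hmeas_f2 x _ _) ?_
      filter_upwards [ae_restrict_mem measurableSet_Ioi] with t ht
      simpa [Real.norm_eq_abs] using hbd2 x t ht _ _ hnorm01 hnorm01
    have hφtend : Tendsto (fun s : ℝ => fderivWithin ℝ u S (x, s) (0, 1)) atTop (nhds 0) := by
      apply squeeze_zero_norm' _ hboundTendsto
      filter_upwards [eventually_ge_atTop (0:ℝ)] with s hs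
      calc ‖fderivWithin ℝ u S (x, s) (0, 1)‖
          ≤ ‖fderivWithin ℝ u S (x, s)‖ * ‖((0:ℝ),(1:ℝ))‖ :=
            (fderivWithin ℝ u S (x, s)).le_opNorm _
        _ = ‖fderivWithin ℝ u S (x, s)‖ := by rw [hnorm01, mul_one]
        _ ≤ C * Real.exp (-α * s) := hdecay₁ (x, s) hs
    have := integral_Ioi_of_hasDerivAt_of_tendsto hφc hφd hInt_ψ hφtend
    rw [this, zero_sub]
  -- value of the second-derivative integral
  have hg2eq : ∀ x : ℝ, (∫ t in Ioi (0:ℝ), fderiv ℝ (fderiv ℝ u) (x, t) (1, 0) (1, 0))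
      = fderivWithin ℝ u S (x, 0) (0, 1) := by
    intro x
    have heq : EqOn (fun t => fderiv ℝ (fderiv ℝ u) (x, t) (1, 0) (1, 0))
        (fun t => - fderiv ℝ (fderiv ℝ u) (x, t) (0, 1) (0, 1)) (Ioi 0) :=
      fun t ht => hharm' x t ht
    rw [setIntegral_congr_fun measurableSet_Ioi heq, integral_neg, hFTC x, neg_neg]
  -- boundary within-derivative
  have hbdry : ∀ ξ₁ : ℝ, derivWithin (fun t => u (ξ₁, t)) (Ici 0) 0
      = fderivWithin ℝ u S (ξ₁, 0) (0, 1) := by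
    intro ξ₁
    have hdw : DifferentiableWithinAt ℝ u S (ξ₁, 0) :=
      (hu.differentiableOn two_ne_zero) (ξ₁, 0) (by simp [hSdef])
    have hD : HasDerivWithinAt (fun t => u (ξ₁, t)) (fderivWithin ℝ u S (ξ₁, 0) (0, 1))
        (Ici 0) 0 :=
      hdw.hasFDerivWithinAt.comp_hasDerivWithinAt 0 ((hcV ξ₁ 0).hasDerivWithinAt) (hmapsTo ξ₁)
    exact hD.derivWithin (uniqueDiffOn_Ici 0 0 Set.self_mem_Ici)
  -- assembly
  have hg'eq : deriv (fun x₁ : ℝ => ∫ t in Set.Ioi (0:ℝ), u (x₁, t))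
      = fun x₁ : ℝ => ∫ t in Set.Ioi (0:ℝ), fderiv ℝ u (x₁, t) (1, 0) :=
    funext fun x => (hgd x).deriv
  refine ⟨fun x => (hgd x).differentiableAt, ?_, ?_⟩
  · rw [hg'eq]; exact fun x => (hg1d x).differentiableAt
  · intro ξ₁
    rw [hg'eq, (hg1d ξ₁).deriv, hg2eq ξ₁, hbdry ξ₁]
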